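/- arXiv:1706.04928 — 6 statements merged into one kernel-verified Lean document; each statement's English description precedes it below -/
import Mathlib

section
/- Let s > 0 be real, k a positive integer, and x an integer with x ≥ k. Then ∑_{m ≥ x} 1/m^{1+s} ≤ (ζ(1+s) − ∑_{m=1}^{k−1} 1/m^{1+s}) · (Γ(k+s)·Γ(x)) / (Γ(k)·Γ(x+s)). -/
open Real Filter

/-- Summability of the shifted p-series. -/
lemma aux_summable (s : ℝ) (hs : 0 < s) (x : ℕ) :
    Summable (fun m : ℕ => (1 : ℝ) / ((m : ℝ) + x) ^ (1 + s)) := by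
  have h : Summable (fun n : ℕ => (1 : ℝ) / (n : ℝ) ^ (1 + s)) :=
    Real.summable_one_div_nat_rpow.mpr (by linarith)
  have := (summable_nat_add_iff x).mpr h
  refine this.congr fun m => ?_
  push_cast
  ring_nf

/-- Pointwise convexity-type inequality. -/
lemma aux_pointwise (s a : ℝ) (hs : 0 < s) (ha : 0 < a) :
    s * (a + 1) ^ (-(1 + s)) ≤ a ^ (-s) - (a + 1) ^ (-s) := by
  have ha1 : (0 : ℝ) < a + 1 := by linarith
  have hA : (0 : ℝ) < a ^ (1 + s) := Real.rpow_pos_of_pos ha _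
  have hB : (0 : ℝ) < (a + 1) ^ (1 + s) := Real.rpow_pos_of_pos ha1 _
  have hua : (0:ℝ) ≤ 1 / a := by positivity
  have hber : 1 + (1 + s) * (1 / a) ≤ (1 + 1 / a) ^ (1 + s) :=
    one_add_mul_self_le_rpow_one_add (by linarith) (by linarith)
  have heq : (1 : ℝ) + 1 / a = (a + 1) / a := by field_simp
  rw [heq, Real.div_rpow ha1.le ha.le] at hber
  have h3 : a + (1 + s) ≤ a * ((a + 1) ^ (1 + s) / a ^ (1 + s)) := by
    have : a + (1 + s) = a * (1 + (1 + s) * (1 / a)) := by field_simp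
    rw [this]
    exact mul_le_mul_of_nonneg_left hber ha.le
  have h4 : (a + (1 + s)) * a ^ (1 + s) ≤ a * (a + 1) ^ (1 + s) := by
    rw [mul_div_assoc'] at h3
    calc (a + (1 + s)) * a ^ (1 + s) ≤ (a * (a + 1) ^ (1 + s) / a ^ (1 + s)) * a ^ (1 + s) :=
          mul_le_mul_of_nonneg_right h3 hA.le
      _ = a * (a + 1) ^ (1 + s) := by field_simp
  have e1 : a ^ (-s) = a / a ^ (1 + s) := by
    rw [eq_div_iff hA.ne', ← Real.rpow_add ha]
    norm_num
  have e2 : (a + 1) ^ (-s) = (a + 1) / (a + 1) ^ (1 + s) := by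
    rw [eq_div_iff hB.ne', ← Real.rpow_add ha1]
    norm_num
  have e3 : (a + 1) ^ (-(1 + s)) = 1 / (a + 1) ^ (1 + s) := by
    rw [Real.rpow_neg ha1.le, one_div]
  rw [e1, e2, e3]
  rw [mul_one_div, div_sub_div _ _ hA.ne' hB.ne', div_le_div_iff₀ hB (by positivity)]
  have : a * (a + 1) ^ (1 + s) - (a + 1) * a ^ (1 + s) ≥ s * a ^ (1 + s) := by nlinarith
  nlinarith [hA.le, hB.le]

/-- Telescoping tail bound: `s * ∑_{m ≥ n+1} m^{-(1+s)} ≤ n^{-s}`. -/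
lemma aux_tail (s : ℝ) (hs : 0 < s) (n : ℕ) (hn : 1 ≤ n) :
    s * ∑' m : ℕ, (1 : ℝ) / ((m : ℝ) + (n + 1)) ^ (1 + s) ≤ (n : ℝ) ^ (-s) := by
  have hnpos : (0 : ℝ) < n := by exact_mod_cast hn
  set g : ℕ → ℝ := fun m => ((m : ℝ) + n) ^ (-s) - ((m : ℝ) + n + 1) ^ (-s) with hg
  have hgnn : ∀ m, 0 ≤ g m := by
    intro m
    have h1 : (0 : ℝ) < (m : ℝ) + n := by positivity
    have := Real.rpow_le_rpow_of_nonpos h1 (by linarith : (m : ℝ) + n ≤ (m : ℝ) + n + 1)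
      (by linarith : -s ≤ 0)
    simpa [hg] using sub_nonneg.mpr this
  have hsum : HasSum g ((n : ℝ) ^ (-s)) := by
    rw [hasSum_iff_tendsto_nat_of_nonneg hgnn]
    have hps : ∀ N : ℕ, ∑ i ∈ Finset.range N, g i = (n : ℝ) ^ (-s) - ((N : ℝ) + n) ^ (-s) := by
      intro N
      have h2 : ∀ i : ℕ, g i = (fun i : ℕ => ((i : ℝ) + n) ^ (-s)) i -
          (fun i : ℕ => ((i : ℝ) + n) ^ (-s)) (i + 1) := by
        intro i; simp only [hg]; push_cast; ring_nf
      rw [Finset.sum_congr rfl fun i _ => h2 i,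
        Finset.sum_range_sub' (fun i : ℕ => ((i : ℝ) + n) ^ (-s)) N]
      norm_num
    simp_rw [hps]
    have h0 : Tendsto (fun N : ℕ => ((N : ℝ) + n) ^ (-s)) atTop (nhds 0) := by
      apply (tendsto_rpow_neg_atTop hs).comp
      exact tendsto_atTop_add_const_right _ _ tendsto_natCast_atTop_atTop
    have := tendsto_const_nhds.sub h0 (f := fun _ : ℕ => (n : ℝ) ^ (-s))
    simpa using this
  have hS : Summable (fun m : ℕ => (1 : ℝ) / ((m : ℝ) + (n + 1)) ^ (1 + s)) := by
    have := aux_summable s hs (n + 1)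
    refine this.congr fun m => ?_
    push_cast; ring_nf
  rw [← tsum_mul_left]
  rw [← hsum.tsum_eq]
  apply Summable.tsum_le_tsum _ (hS.mul_left s) hsum.summable
  intro m
  have h1 : (0 : ℝ) < (m : ℝ) + n := by positivity
  have key := aux_pointwise s ((m : ℝ) + n) hs h1
  have e : (1 : ℝ) / ((m : ℝ) + (n + 1)) ^ (1 + s) = ((m : ℝ) + n + 1) ^ (-(1 + s)) := by
    rw [Real.rpow_neg (by positivity), one_div]
    ring_nf
  rw [e]
  simpa [hg] using key

/-- Recurrence: tail at `n` equals first term plus tail at `n+1`. -/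
lemma aux_rec (s : ℝ) (hs : 0 < s) (n : ℕ) :
    (∑' m : ℕ, (1 : ℝ) / ((m : ℝ) + n) ^ (1 + s)) =
      1 / (n : ℝ) ^ (1 + s) + ∑' m : ℕ, (1 : ℝ) / ((m : ℝ) + (n + 1)) ^ (1 + s) := by
  rw [Summable.tsum_eq_zero_add (aux_summable s hs n)]
  congr 1
  · norm_num
  · apply tsum_congr
    intro m
    push_cast
    ring_nf

lemma aux_nonneg (s : ℝ) (x : ℕ) :
    0 ≤ ∑' m : ℕ, (1 : ℝ) / ((m : ℝ) + x) ^ (1 + s) :=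
  tsum_nonneg fun m => by positivity

/-- Main monotonicity by induction. -/
lemma aux_main (s : ℝ) (hs : 0 < s) (k : ℕ) (hk : 1 ≤ k) :
    ∀ x : ℕ, k ≤ x →
      (∑' m : ℕ, (1 : ℝ) / ((m : ℝ) + x) ^ (1 + s)) * Real.Gamma ((x : ℝ) + s)
          * Real.Gamma (k : ℝ) ≤
        (∑' m : ℕ, (1 : ℝ) / ((m : ℝ) + k) ^ (1 + s)) * Real.Gamma ((k : ℝ) + s)
          * Real.Gamma (x : ℝ) := by
  intro x hx
  induction x, hx using Nat.le_induction with
  | base => exact le_rfl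
  | succ n hn ih =>
    have hn1 : (1 : ℕ) ≤ n := le_trans hk hn
    have hnpos : (0 : ℝ) < n := by exact_mod_cast hn1
    set T := fun x : ℕ => ∑' m : ℕ, (1 : ℝ) / ((m : ℝ) + x) ^ (1 + s) with hT
    have hGk : 0 < Real.Gamma (k : ℝ) := Real.Gamma_pos_of_pos (by exact_mod_cast hk)
    have hGns : 0 < Real.Gamma ((n : ℝ) + s) := Real.Gamma_pos_of_pos (by positivity)
    -- key step bound: (n + s) * T (n+1) ≤ n * T n
    have hstep : ((n : ℝ) + s) * T (n + 1) ≤ (n : ℝ) * T n := by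
      have htail := aux_tail s hs n hn1
      have hrec := aux_rec s hs n
      have hxs : (n : ℝ) ^ (-s) = (n : ℝ) * (1 / (n : ℝ) ^ (1 + s)) := by
        rw [mul_one_div, eq_div_iff (by positivity : ((n : ℝ) ^ (1 + s)) ≠ 0),
          ← Real.rpow_add hnpos, show -s + (1 + s) = 1 by ring, Real.rpow_one]
      have hT1 : T (n + 1) = ∑' m : ℕ, (1 : ℝ) / ((m : ℝ) + (n + 1)) ^ (1 + s) := by
        simp only [hT]
        apply tsum_congr; intro m; push_cast; ring_nf
      rw [hT1]
      have : (n : ℝ) * T n = (n : ℝ) * (1 / (n : ℝ) ^ (1 + s)) +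
          (n : ℝ) * ∑' m : ℕ, (1 : ℝ) / ((m : ℝ) + (n + 1)) ^ (1 + s) := by
        simp only [hT]
        rw [hrec]; ring
      rw [this, ← hxs]
      nlinarith [htail]
    -- Gamma recurrences
    have hg1 : Real.Gamma (((n : ℕ) + 1 : ℕ) : ℝ) = (n : ℝ) * Real.Gamma (n : ℝ) := by
      push_cast
      exact Real.Gamma_add_one hnpos.ne'
    have hg2 : Real.Gamma ((((n : ℕ) + 1 : ℕ) : ℝ) + s) = ((n : ℝ) + s) * Real.Gamma ((n : ℝ) + s) := by
      push_cast
      rw [show (n : ℝ) + 1 + s = ((n : ℝ) + s) + 1 by ring]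
      exact Real.Gamma_add_one (by positivity)
    rw [hg1, hg2]
    have hTnn : 0 ≤ T (n + 1) := aux_nonneg s (n + 1)
    calc T (n + 1) * (((n : ℝ) + s) * Real.Gamma ((n : ℝ) + s)) * Real.Gamma (k : ℝ)
        = (((n : ℝ) + s) * T (n + 1)) * (Real.Gamma ((n : ℝ) + s) * Real.Gamma (k : ℝ)) := by
          ring
      _ ≤ ((n : ℝ) * T n) * (Real.Gamma ((n : ℝ) + s) * Real.Gamma (k : ℝ)) := by
          apply mul_le_mul_of_nonneg_right hstep (by positivity)
      _ = (n : ℝ) * (T n * Real.Gamma ((n : ℝ) + s) * Real.Gamma (k : ℝ)) := by ring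
      _ ≤ (n : ℝ) * (T k * Real.Gamma ((k : ℝ) + s) * Real.Gamma (n : ℝ)) := by
          apply mul_le_mul_of_nonneg_left ih hnpos.le
      _ = T k * Real.Gamma ((k : ℝ) + s) * ((n : ℝ) * Real.Gamma (n : ℝ)) := by ring

/-- For real `s > 0`, positive integer `k` and integer `x ≥ k`,
`∑_{m ≥ x} 1/m^{1+s} ≤ (ζ(1+s) − ∑_{m=1}^{k−1} 1/m^{1+s}) · Γ(k+s)Γ(x)/(Γ(k)Γ(x+s))`,
where `ζ(1+s) = ∑_{m ≥ 1} 1/m^{1+s}`. -/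
theorem stmt_3 (s : ℝ) (hs : 0 < s) (k x : ℕ) (hk : 1 ≤ k) (hx : k ≤ x) :
    (∑' m : ℕ, (1 : ℝ) / ((m : ℝ) + x) ^ (1 + s)) ≤
      ((∑' m : ℕ, (1 : ℝ) / ((m : ℝ) + 1) ^ (1 + s))
          - ∑ m ∈ Finset.Icc 1 (k - 1), (1 : ℝ) / (m : ℝ) ^ (1 + s))
        * (Real.Gamma ((k : ℝ) + s) * Real.Gamma (x : ℝ))
        / (Real.Gamma (k : ℝ) * Real.Gamma ((x : ℝ) + s)) := by
  -- rewrite the zeta difference as the tail at k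
  have hzeta : (∑' m : ℕ, (1 : ℝ) / ((m : ℝ) + 1) ^ (1 + s))
      - ∑ m ∈ Finset.Icc 1 (k - 1), (1 : ℝ) / (m : ℝ) ^ (1 + s)
      = ∑' m : ℕ, (1 : ℝ) / ((m : ℝ) + k) ^ (1 + s) := by
    obtain ⟨j, rfl⟩ := Nat.exists_eq_add_of_le hk
    have h1 := Summable.sum_add_tsum_nat_add (f := fun m : ℕ => (1 : ℝ) / ((m : ℝ) + 1) ^ (1 + s)) j
      ((aux_summable s hs 1).congr fun m => by norm_num)
    have h2 : ∑ m ∈ Finset.Icc 1 (1 + j - 1), (1 : ℝ) / (m : ℝ) ^ (1 + s)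
        = ∑ i ∈ Finset.range j, (1 : ℝ) / ((i : ℝ) + 1) ^ (1 + s) := by
      rw [show (1 : ℕ) + j - 1 = j from by omega, ← Finset.Ico_add_one_right_eq_Icc,
        Finset.sum_Ico_eq_sum_range]
      apply Finset.sum_congr (by norm_num)
      intro i _
      push_cast
      ring_nf
    have h3 : (∑' m : ℕ, (1 : ℝ) / ((m : ℝ) + ((1 + j : ℕ) : ℝ)) ^ (1 + s))
        = ∑' i : ℕ, (fun m : ℕ => (1 : ℝ) / ((m : ℝ) + 1) ^ (1 + s)) (i + j) := by
      apply tsum_congr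
      intro m
      push_cast
      ring_nf
    rw [h2]
    linarith [h1, h3]
  rw [hzeta]
  have hGk : 0 < Real.Gamma (k : ℝ) := Real.Gamma_pos_of_pos (by exact_mod_cast hk)
  have hxpos : (0 : ℝ) < x := by exact_mod_cast lt_of_lt_of_le hk hx
  have hGxs : 0 < Real.Gamma ((x : ℝ) + s) := Real.Gamma_pos_of_pos (by positivity)
  rw [le_div_iff₀ (by positivity)]
  have := aux_main s hs k hk x hx
  calc (∑' m : ℕ, (1 : ℝ) / ((m : ℝ) + x) ^ (1 + s)) * (Real.Gamma (k : ℝ) * Real.Gamma ((x : ℝ) + s))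
      = (∑' m : ℕ, (1 : ℝ) / ((m : ℝ) + x) ^ (1 + s)) * Real.Gamma ((x : ℝ) + s)
          * Real.Gamma (k : ℝ) := by ring
    _ ≤ (∑' m : ℕ, (1 : ℝ) / ((m : ℝ) + k) ^ (1 + s)) * Real.Gamma ((k : ℝ) + s)
          * Real.Gamma (x : ℝ) := this
    _ = (∑' m : ℕ, (1 : ℝ) / ((m : ℝ) + k) ^ (1 + s))
          * (Real.Gamma ((k : ℝ) + s) * Real.Gamma (x : ℝ)) := by ring
end

section
/- Let s > 0 be real, x a positive integer, and A a real number. If ∑_{m ≥ x} 1/m^{1+s} ≤ A·Γ(x)/(s·Γ(x+s)), then ∑_{m ≥ x+1} 1/m^{1+s} ≤ A·Γ(x+1)/(s·Γ(x+1+s)). -/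
open Filter

/-- Key MVT step: for `0 < s`, `1 ≤ y`, we have `s*(y+1)^(-(1+s)) ≤ y^(-s) - (y+1)^(-s)`. -/
lemma key_step (s : ℝ) (hs : 0 < s) (y : ℝ) (hy : 1 ≤ y) :
    s * (y + 1) ^ (-(1 + s)) ≤ y ^ (-s) - (y + 1) ^ (-s) := by
  have hy0 : (0:ℝ) < y := by linarith
  have hlt : y < y + 1 := by linarith
  have hderiv : ∀ t ∈ Set.Ioo y (y+1), HasDerivAt (fun t : ℝ => t ^ (-s))
      ((-s) * t ^ (-s - 1)) t := by
    intro t ht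
    exact Real.hasDerivAt_rpow_const (Or.inl (by nlinarith [ht.1] : t ≠ 0))
  have hcont : ContinuousOn (fun t : ℝ => t ^ (-s)) (Set.Icc y (y+1)) := by
    apply ContinuousOn.rpow_const continuousOn_id
    intro t ht
    exact Or.inl (by nlinarith [ht.1] : t ≠ 0)
  obtain ⟨c, hc, hceq⟩ := exists_hasDerivAt_eq_slope (fun t : ℝ => t ^ (-s))
    (fun t => (-s) * t ^ (-s - 1)) hlt hcont hderiv
  have hc0 : 0 < c := by linarith [hc.1]
  have hcle : c ≤ y + 1 := le_of_lt hc.2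
  have hmono : (y + 1) ^ (-s - 1) ≤ c ^ (-s - 1) :=
    Real.rpow_le_rpow_of_nonpos hc0 hcle (by linarith)
  have : (-s) * c ^ (-s - 1) = ((y+1) ^ (-s) - y ^ (-s)) / (y + 1 - y) := hceq
  rw [show y + 1 - y = (1:ℝ) by ring, div_one] at this
  have hrw : -(1 + s) = -s - 1 := by ring
  rw [hrw]
  nlinarith [hmono]

/-- For real `s > 0`, positive integer `x`, real `A`: if
`∑_{m ≥ x} 1/m^{1+s} ≤ A·Γ(x)/(s·Γ(x+s))` then
`∑_{m ≥ x+1} 1/m^{1+s} ≤ A·Γ(x+1)/(s·Γ(x+1+s))`. -/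
theorem stmt_4 (s : ℝ) (hs : 0 < s) (x : ℕ) (hx : 1 ≤ x) (A : ℝ)
    (h : (∑' m : ℕ, (1 : ℝ) / ((m : ℝ) + x) ^ (1 + s)) ≤
      A * Real.Gamma (x : ℝ) / (s * Real.Gamma ((x : ℝ) + s))) :
    (∑' m : ℕ, (1 : ℝ) / ((m : ℝ) + (x + 1)) ^ (1 + s)) ≤
      A * Real.Gamma ((x : ℝ) + 1) / (s * Real.Gamma ((x : ℝ) + 1 + s)) := by
  have hx0 : (0:ℝ) < x := by exact_mod_cast Nat.lt_of_lt_of_le Nat.zero_lt_one hx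
  have hxs : (0:ℝ) < (x:ℝ) + s := by linarith
  have h1s : (1:ℝ) < 1 + s := by linarith
  -- summability
  have hg : Summable (fun n : ℕ => (1:ℝ) / (n:ℝ) ^ (1 + s)) :=
    Real.summable_one_div_nat_rpow.2 h1s
  have hsum : ∀ k : ℕ, Summable (fun m : ℕ => (1:ℝ) / ((m:ℝ) + (k:ℝ)) ^ (1 + s)) := by
    intro k
    have := (summable_nat_add_iff k).2 hg
    refine this.congr fun m => ?_
    push_cast
    ring_nf
  have hsum1 := hsum x
  have hsum2' := hsum (x + 1)
  have hsum2 : Summable (fun m : ℕ => (1:ℝ) / ((m:ℝ) + ((x:ℝ) + 1)) ^ (1 + s)) := by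
    refine hsum2'.congr fun m => ?_
    push_cast
    ring_nf
  set T : ℝ := ∑' m : ℕ, (1:ℝ) / ((m:ℝ) + ((x:ℝ) + 1)) ^ (1 + s) with hT
  -- split the sum
  have hsplit : (∑' m : ℕ, (1:ℝ) / ((m:ℝ) + (x:ℝ)) ^ (1 + s)) = 1 / (x:ℝ) ^ (1 + s) + T := by
    rw [Summable.tsum_eq_zero_add hsum1]
    congr 1
    · norm_num
    · exact tsum_congr fun m => by push_cast; ring_nf
  -- key estimate : s * T ≤ x ^ (-s)
  have hkey : s * T ≤ (x:ℝ) ^ (-s) := by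
    set b : ℕ → ℝ := fun m => ((m:ℝ) + (x:ℝ)) ^ (-s) with hb
    have hterm : ∀ m : ℕ, s * ((1:ℝ) / ((m:ℝ) + ((x:ℝ) + 1)) ^ (1 + s)) ≤ b m - b (m+1) := by
      intro m
      have hy : (1:ℝ) ≤ (m:ℝ) + (x:ℝ) := by
        have h0 : (0:ℝ) ≤ (m:ℝ) := Nat.cast_nonneg m
        have h1 : (1:ℝ) ≤ (x:ℝ) := by exact_mod_cast hx
        linarith
      have := key_step s hs ((m:ℝ) + (x:ℝ)) hy
      have h1 : (1:ℝ) / ((m:ℝ) + ((x:ℝ) + 1)) ^ (1 + s)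
          = ((m:ℝ) + (x:ℝ) + 1) ^ (-(1 + s)) := by
        rw [Real.rpow_neg (by linarith), one_div]
        ring_nf
      rw [h1]
      have h2 : b (m+1) = ((m:ℝ) + (x:ℝ) + 1) ^ (-s) := by
        simp only [hb]; push_cast; ring_nf
      rw [h2]
      exact this
    have hnonneg : ∀ m : ℕ, (0:ℝ) ≤ b m - b (m+1) := by
      intro m
      have := hterm m
      have hp : (0:ℝ) < (1:ℝ) / ((m:ℝ) + ((x:ℝ) + 1)) ^ (1 + s) := by
        apply div_pos one_pos
        apply Real.rpow_pos_of_pos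
        have : (0:ℝ) ≤ (m:ℝ) := Nat.cast_nonneg m
        linarith
      nlinarith
    have hpart : ∀ n : ℕ, ∑ i ∈ Finset.range n, (b i - b (i+1)) = b 0 - b n :=
      fun n => Finset.sum_range_sub' b n
    have hbsum : Summable (fun m => b m - b (m+1)) := by
      apply summable_of_sum_range_le hnonneg (c := b 0)
      intro n
      rw [hpart n]
      have : (0:ℝ) ≤ b n := Real.rpow_nonneg (by positivity) _
      linarith
    have hblim : Tendsto (fun n : ℕ => b n) atTop (nhds 0) := by
      have h1 : Tendsto (fun t : ℝ => t ^ (-s)) atTop (nhds 0) := tendsto_rpow_neg_atTop hs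
      have h2 : Tendsto (fun n : ℕ => (n:ℝ) + (x:ℝ)) atTop atTop :=
        tendsto_atTop_add_const_right _ _ tendsto_natCast_atTop_atTop
      exact h1.comp h2
    have htsum_b : (∑' m, (b m - b (m+1))) = b 0 := by
      have h1 := hbsum.hasSum.tendsto_sum_nat
      have h2 : Tendsto (fun n : ℕ => ∑ i ∈ Finset.range n, (b i - b (i+1))) atTop
          (nhds (b 0 - 0)) := by
        simp only [hpart]
        exact tendsto_const_nhds.sub hblim
      rw [sub_zero] at h2
      exact tendsto_nhds_unique h1 h2
    calc s * T = ∑' m : ℕ, s * ((1:ℝ) / ((m:ℝ) + ((x:ℝ) + 1)) ^ (1 + s)) := by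
          rw [hT, tsum_mul_left]
      _ ≤ ∑' m, (b m - b (m+1)) := Summable.tsum_le_tsum hterm (hsum2.mul_left s) hbsum
      _ = b 0 := htsum_b
      _ = (x:ℝ) ^ (-s) := by simp [hb]
  -- Gamma recurrences
  have hG1 : Real.Gamma ((x:ℝ) + 1) = (x:ℝ) * Real.Gamma (x:ℝ) :=
    Real.Gamma_add_one (ne_of_gt hx0)
  have hG2 : Real.Gamma ((x:ℝ) + 1 + s) = ((x:ℝ) + s) * Real.Gamma ((x:ℝ) + s) := by
    rw [show (x:ℝ) + 1 + s = ((x:ℝ) + s) + 1 by ring]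
    exact Real.Gamma_add_one (ne_of_gt hxs)
  have hGpos : 0 < Real.Gamma ((x:ℝ) + s) := Real.Gamma_pos_of_pos hxs
  -- the goal's tsum equals T
  have hgoal : (∑' m : ℕ, (1:ℝ) / ((m:ℝ) + ((x:ℕ):ℝ) + 1) ^ (1 + s)) = T := by
    exact tsum_congr fun m => by ring_nf
  rw [hsplit] at h
  -- now finish
  have hxx : (x:ℝ) * ((x:ℝ) ^ (-(1+s))) = (x:ℝ) ^ (-s) := by
    have h1 := (Real.rpow_add hx0 1 (-(1+s))).symm
    rw [Real.rpow_one] at h1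
    rw [h1, show (1:ℝ) + -(1+s) = -s by ring]
  have h1x : (1:ℝ)/(x:ℝ)^(1+s) = (x:ℝ)^(-(1+s)) := by
    rw [Real.rpow_neg hx0.le, one_div]
  have hfrac : (0:ℝ) ≤ (x:ℝ)/((x:ℝ)+s) := by positivity
  have hR : A * Real.Gamma ((x:ℝ)+1) / (s * Real.Gamma ((x:ℝ)+1+s))
      = (A * Real.Gamma (x:ℝ) / (s * Real.Gamma ((x:ℝ)+s))) * ((x:ℝ)/((x:ℝ)+s)) := by
    rw [hG1, hG2]
    field_simp
  have step1 : T ≤ (1/(x:ℝ)^(1+s) + T) * ((x:ℝ)/((x:ℝ)+s)) := by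
    rw [h1x, mul_div_assoc', le_div_iff₀ hxs]
    nlinarith [hkey, hxx]
  rw [hR]
  calc (∑' m : ℕ, (1:ℝ) / ((m:ℝ) + ((x:ℝ) + 1)) ^ (1 + s))
      = T := by rw [hT]
    _ ≤ (1/(x:ℝ)^(1+s) + T) * ((x:ℝ)/((x:ℝ)+s)) := step1
    _ ≤ (A * Real.Gamma (x:ℝ) / (s * Real.Gamma ((x:ℝ)+s))) * ((x:ℝ)/((x:ℝ)+s)) :=
        mul_le_mul_of_nonneg_right h hfrac
end

section
/- Let s > 0 be real and let q ≥ 1, a ≥ 1, and 0 ≤ b < q be integers, and set m = a·q + b. Then f(s;m,q) = s^{−m/q}·g(s, b/q), where m/q denotes real division. -/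
/-- `[m/q]_p = ⌊(m−p−1)/q⌋ + 1`. -/
def dilutedLen (m q p : ℕ) : ℕ := (m - p - 1) / q + 1

/-- `f(s;m,q) = (1/q)·∑_{p=0}^{q−1} s^{−[m/q]_p}`. -/
noncomputable def fFG (s : ℝ) (m q : ℕ) : ℝ :=
  (1 / (q : ℝ)) * ∑ p ∈ Finset.range q, (s ^ dilutedLen m q p)⁻¹

/-- `g(s,x) = s^x·(x·s^{−1} + 1 − x)`. -/
noncomputable def gFG (s x : ℝ) : ℝ := s ^ x * (x * s⁻¹ + 1 - x)

/-- For real `s > 0` and integers `q ≥ 1`, `a ≥ 1`, `0 ≤ b < q` with `m = a·q + b`,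
one has `f(s;m,q) = s^{−m/q}·g(s, b/q)`, where `m/q` denotes real division. -/
theorem stmt_10 (s : ℝ) (hs : 0 < s) (q a b : ℕ) (hq : 1 ≤ q) (ha : 1 ≤ a) (hb : b < q)
    (m : ℕ) (hm : m = a * q + b) :
    fFG s m q = s ^ (-((m : ℝ) / q)) * gFG s ((b : ℝ) / q) := by
  have hsne : s ≠ 0 := ne_of_gt hs
  have hqne : (q : ℝ) ≠ 0 := by positivity
  have hc1 : a * q ≤ m := by rw [hm]; omega
  have hcq : q ≤ a * q := Nat.le_mul_of_pos_left q (by omega)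
  have hsub : (a - 1) * q = a * q - q := by
    rw [Nat.sub_mul, one_mul]
  have h1 : ∀ p, p < b → dilutedLen m q p = a + 1 := by
    intro p hp
    have : (m - p - 1) / q = a := by
      apply Nat.div_eq_of_lt_le
      · omega
      · have : (a + 1) * q = a * q + q := by ring
        omega
    simp [dilutedLen, this]
  have h2 : ∀ p, b ≤ p → p < q → dilutedLen m q p = a := by
    intro p hp hp'
    have : (m - p - 1) / q = a - 1 := by
      apply Nat.div_eq_of_lt_le
      · omega
      · have : (a - 1 + 1) * q = (a - 1) * q + q := by ring
        omega
    simp [dilutedLen, this]; omega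
  have hsum : ∑ p ∈ Finset.range q, (s ^ dilutedLen m q p)⁻¹
      = b * (s ^ (a + 1))⁻¹ + (q - b : ℕ) * (s ^ a)⁻¹ := by
    rw [Finset.range_eq_Ico, ← Finset.sum_Ico_consecutive _ (Nat.zero_le b) hb.le]
    have e1 : ∑ p ∈ Finset.Ico 0 b, (s ^ dilutedLen m q p)⁻¹
        = b * (s ^ (a + 1))⁻¹ := by
      rw [Finset.sum_congr rfl fun p hp => by
        rw [h1 p (Finset.mem_Ico.mp hp).2]]
      simp [mul_comm]
    have e2 : ∑ p ∈ Finset.Ico b q, (s ^ dilutedLen m q p)⁻¹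
        = (q - b : ℕ) * (s ^ a)⁻¹ := by
      rw [Finset.sum_congr rfl fun p hp => by
        rw [h2 p (Finset.mem_Ico.mp hp).1 (Finset.mem_Ico.mp hp).2]]
      simp [Nat.card_Ico, mul_comm]
    rw [e1, e2]
  have hkey : s ^ (-((m : ℝ) / q)) * gFG s ((b : ℝ) / q)
      = (s ^ a)⁻¹ * (((b : ℝ) / q) * s⁻¹ + 1 - (b : ℝ) / q) := by
    unfold gFG
    have hmq : -((m : ℝ) / q) = -((b : ℝ) / q) + -(a : ℝ) := by
      rw [hm]; push_cast; field_simp; ring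
    rw [hmq, Real.rpow_add hs, Real.rpow_neg hs.le ((b : ℝ) / q)]
    rw [show -(a : ℝ) = ((-a : ℤ) : ℝ) by push_cast; ring, Real.rpow_intCast,
      zpow_neg, zpow_natCast]
    have hbq : s ^ ((b : ℝ) / q) ≠ 0 := by positivity
    field_simp
  rw [hkey]
  unfold fFG
  rw [hsum, Nat.cast_sub hb.le]
  field_simp
  ring
end

section
/- Let s > 1 be real. For every x ∈ [0,1], one has g(s,x) ≤ g*(s), with equality when x = x*(s) := 1 + 1/(s−1) − 1/ln s. -/
/-- `x*(s) = 1 + 1/(s−1) − 1/ln s`. -/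
noncomputable def xStar (s : ℝ) : ℝ := 1 + 1 / (s - 1) - 1 / Real.log s

/-- `g*(s) = ((s−1)/ln s)·exp(ln s/(s−1) − 1)`. -/
noncomputable def gStar (s : ℝ) : ℝ :=
  ((s - 1) / Real.log s) * Real.exp (Real.log s / (s - 1) - 1)

lemma key_one_sub_mul_exp (t : ℝ) : (1 - t) * Real.exp t ≤ 1 := by
  have h1 : -t + 1 ≤ Real.exp (-t) := Real.add_one_le_exp (-t)
  have h2 : Real.exp (-t) * Real.exp t = 1 := by
    rw [← Real.exp_add]; simp
  nlinarith [Real.exp_pos t]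

/-- For real `s > 1`, `g(s,x) ≤ g*(s)` for every `x ∈ [0,1]`,
with equality when `x = x*(s)`. -/
theorem stmt_11 (s : ℝ) (hs : 1 < s) :
    (∀ x ∈ Set.Icc (0 : ℝ) 1, gFG s x ≤ gStar s) ∧ gFG s (xStar s) = gStar s := by
  have hs0 : (0:ℝ) < s := by linarith
  have hL : 0 < Real.log s := Real.log_pos hs
  have hs1 : (0:ℝ) < s - 1 := by linarith
  set L := Real.log s with hLdef
  have hexpL : Real.exp L = s := Real.exp_log hs0
  have hLne : L ≠ 0 := ne_of_gt hL
  have hsne : s ≠ 0 := ne_of_gt hs0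
  have hs1ne : s - 1 ≠ 0 := ne_of_gt hs1
  have hg : ∀ x : ℝ, gFG s x = Real.exp (L * x) * (1 - (s - 1) / s * x) := by
    intro x
    unfold gFG
    rw [Real.rpow_def_of_pos hs0]
    congr 1
    field_simp
    ring
  have hgStar_pos : 0 < gStar s := by
    unfold gStar
    positivity
  have hiden : ∀ x : ℝ, gFG s x
      = gStar s * ((1 - L * (x - xStar s)) * Real.exp (L * (x - xStar s))) := by
    intro x
    have h1 : L * x = (L * (x - xStar s)) + ((L / (s - 1) - 1) + L) := by
      unfold xStar
      rw [← hLdef]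
      field_simp
      ring
    rw [hg, h1, Real.exp_add, Real.exp_add, hexpL]
    unfold gStar xStar
    rw [← hLdef]
    field_simp
    ring
  constructor
  · intro x hx
    rw [hiden x]
    calc gStar s * ((1 - L * (x - xStar s)) * Real.exp (L * (x - xStar s)))
        ≤ gStar s * 1 :=
          mul_le_mul_of_nonneg_left (key_one_sub_mul_exp _) (le_of_lt hgStar_pos)
      _ = gStar s := mul_one _
  · rw [hiden (xStar s)]
    simp
end

section
/- Let s ≥ 2 be real and let q ≥ 1 and m ≥ q be integers. Then f(s;m,q) ≤ (2/e)·((s−1)/ln s)·s^{−m/q}, where m/q denotes real division. -/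
lemma z_exp_le_aux14 (z : ℝ) : z * Real.exp (-z) ≤ Real.exp (-1) := by
  have h := Real.add_one_le_exp (z - 1)
  have hz : z ≤ Real.exp (z - 1) := by linarith
  calc z * Real.exp (-z) ≤ Real.exp (z-1) * Real.exp (-z) :=
        mul_le_mul_of_nonneg_right hz (Real.exp_pos _).le
    _ = Real.exp (-1) := by rw [← Real.exp_add]; ring_nf

lemma log_le_aux14 (s : ℝ) (hs : 2 ≤ s) : Real.log s ≤ (s - 1) * Real.log 2 := by
  have h2 : Real.log s = Real.log 2 + Real.log (s/2) := by
    conv_lhs => rw [show s = 2*(s/2) by ring]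
    rw [Real.log_mul (by norm_num) (by positivity)]
  have h3 : Real.log (s/2) ≤ s/2 - 1 := Real.log_le_sub_one_of_pos (by linarith)
  have h4 : (0.6931471803 : ℝ) < Real.log 2 := Real.log_two_gt_d9
  nlinarith

lemma key_aux14 (s x : ℝ) (hs : 2 ≤ s) :
    (1 - x * (s-1)/s) * Real.exp (x * Real.log s)
      ≤ (2 / Real.exp 1) * ((s-1) / Real.log s) := by
  have hs0 : 0 < s := by linarith
  have hs1 : (0:ℝ) < s - 1 := by linarith
  have hb : 0 < Real.log s := Real.log_pos (by linarith)
  have ha : 0 < (s-1)/s := div_pos hs1 hs0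
  set b := Real.log s with hbdef
  set a := (s-1)/s with hadef
  set z := b/a - b*x with hzdef
  have h1 : 1 - x * (s-1)/s = (a/b) * z := by
    rw [hzdef, hadef]; field_simp [hs0.ne', hs1.ne', hb.ne']
  have h2 : Real.exp (x * b) = Real.exp (b/a) * Real.exp (-z) := by
    rw [← Real.exp_add, hzdef]; ring_nf
  rw [h1, h2]
  have h3 : (a/b) * z * (Real.exp (b/a) * Real.exp (-z))
      = (a/b) * Real.exp (b/a) * (z * Real.exp (-z)) := by ring
  rw [h3]
  have h4 : (a/b) * Real.exp (b/a) * (z * Real.exp (-z))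
      ≤ (a/b) * Real.exp (b/a) * Real.exp (-1) :=
    mul_le_mul_of_nonneg_left (z_exp_le_aux14 z) (by positivity)
  refine h4.trans ?_
  have h5 : b/a = b + b/(s-1) := by
    rw [hadef]; field_simp; ring
  have h6 : Real.exp (b/(s-1)) ≤ 2 := by
    have hll := log_le_aux14 s hs
    have h7 : b/(s-1) ≤ Real.log 2 := by
      rw [div_le_iff₀ hs1]; linarith
    calc Real.exp (b/(s-1)) ≤ Real.exp (Real.log 2) := Real.exp_le_exp.mpr h7
      _ = 2 := Real.exp_log (by norm_num)
  have h8 : Real.exp (b/a) = s * Real.exp (b/(s-1)) := by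
    rw [h5, Real.exp_add, Real.exp_log hs0]
  rw [h8, Real.exp_neg, hadef]
  have hmain : (s-1)/s/b * (s * Real.exp (b/(s-1))) ≤ (s-1)/s/b * (s * 2) := by
    apply mul_le_mul_of_nonneg_left _ (by positivity)
    exact mul_le_mul_of_nonneg_left h6 hs0.le
  calc (s-1)/s/b * (s * Real.exp (b/(s-1))) * (Real.exp 1)⁻¹
      ≤ (s-1)/s/b * (s * 2) * (Real.exp 1)⁻¹ :=
        mul_le_mul_of_nonneg_right hmain (by positivity)
    _ = 2 / Real.exp 1 * ((s-1)/b) := by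
        field_simp

/-- For real `s ≥ 2` and integers `q ≥ 1`, `m ≥ q`,
`f(s;m,q) ≤ (2/e)·((s−1)/ln s)·s^{−m/q}`, with real division `m/q`. -/
theorem stmt_14 (s : ℝ) (hs : 2 ≤ s) (q m : ℕ) (hq : 1 ≤ q) (hm : q ≤ m) :
    fFG s m q ≤ (2 / Real.exp 1) * ((s - 1) / Real.log s) * s ^ (-((m : ℝ) / q)) := by
  have hq0 : 0 < q := hq
  have hm1 : 1 ≤ m := le_trans hq hm
  have hs0 : (0:ℝ) < s := by linarith
  obtain ⟨a, r, hr1, hrq, hmeq, ha1⟩ :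
      ∃ a r, 1 ≤ r ∧ r ≤ q ∧ m = q*a + r ∧ (r < q → 1 ≤ a) := by
    refine ⟨(m-1)/q, (m-1)%q + 1, Nat.le_add_left _ _, ?_, ?_, ?_⟩
    · have := Nat.mod_lt (m-1) hq0; omega
    · have h := Nat.div_add_mod (m-1) q
      obtain ⟨c, hc⟩ : ∃ c, q * ((m-1)/q) = c := ⟨_, rfl⟩
      rw [hc] at h ⊢; omega
    · intro hlt
      rcases Nat.eq_zero_or_pos ((m-1)/q) with h0 | h1
      · exfalso
        have h := Nat.div_add_mod (m-1) q
        rw [h0, Nat.mul_zero] at h; omega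
      · exact h1
  have hL1 : ∀ p < r, dilutedLen m q p = a + 1 := by
    intro p hp
    have h1 : m - p - 1 = (r - p - 1) + q * a := by
      obtain ⟨c, hc⟩ : ∃ c, q * a = c := ⟨_, rfl⟩
      rw [hc] at hmeq ⊢; omega
    unfold dilutedLen
    rw [h1, Nat.add_mul_div_left _ _ hq0, Nat.div_eq_of_lt (by omega)]; omega
  have hL2 : ∀ p, r ≤ p → p < q → dilutedLen m q p = a := by
    intro p hrp hpq
    obtain ⟨a', rfl⟩ : ∃ a', a = a' + 1 := by
      have := ha1 (lt_of_le_of_lt hrp hpq)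
      exact ⟨a - 1, by omega⟩
    have hmeq' : m = q*a' + q + r := by rw [hmeq]; ring
    have h1 : m - p - 1 = (q + r - p - 1) + q * a' := by
      obtain ⟨c, hc⟩ : ∃ c, q * a' = c := ⟨_, rfl⟩
      rw [hc] at hmeq' ⊢; omega
    unfold dilutedLen
    rw [h1, Nat.add_mul_div_left _ _ hq0, Nat.div_eq_of_lt (by omega)]; omega
  -- compute the sum
  have hsum : ∑ p ∈ Finset.range q, (s ^ dilutedLen m q p)⁻¹
      = (r:ℝ) * (s^(a+1))⁻¹ + ((q-r:ℕ):ℝ) * (s^a)⁻¹ := by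
    rw [Finset.range_eq_Ico, ← Finset.sum_Ico_consecutive _ (Nat.zero_le r) hrq]
    congr 1
    · rw [Finset.sum_congr rfl fun p hp => by
        rw [hL1 p (Finset.mem_Ico.mp hp).2]]
      rw [Finset.sum_const, Nat.card_Ico, nsmul_eq_mul]
      norm_num
    · rw [Finset.sum_congr rfl fun p hp => by
        rw [hL2 p (Finset.mem_Ico.mp hp).1 (Finset.mem_Ico.mp hp).2]]
      rw [Finset.sum_const, Nat.card_Ico, nsmul_eq_mul]
  -- real setup
  set x : ℝ := (r:ℝ)/q with hxdef
  have hkey := key_aux14 s x hs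
  have hE : (0:ℝ) < Real.exp (x * Real.log s) := Real.exp_pos _
  have hk2 : 1 - x*(s-1)/s ≤ (2 / Real.exp 1) * ((s - 1) / Real.log s)
      * (Real.exp (x * Real.log s))⁻¹ := by
    rw [← div_eq_mul_inv, le_div_iff₀ hE]
    exact hkey
  -- rewrite the rpow
  have hmq : -((m:ℝ)/q) = -(a:ℝ) + (-x) := by
    have : (m:ℝ) = q*a + r := by exact_mod_cast congrArg (Nat.cast : ℕ → ℝ) hmeq
    rw [hxdef, this]
    field_simp
    ring
  have hrpow : s ^ (-((m : ℝ) / q)) = (s^a)⁻¹ * (Real.exp (x * Real.log s))⁻¹ := by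
    rw [hmq, Real.rpow_add hs0, Real.rpow_neg hs0.le, Real.rpow_neg hs0.le,
      Real.rpow_natCast, Real.rpow_def_of_pos hs0, mul_comm (Real.log s) x]
  -- the LHS as a product
  have hcast : ((q-r:ℕ):ℝ) = (q:ℝ) - r := by
    exact Nat.cast_sub hrq
  have hqR : (0:ℝ) < q := by exact_mod_cast hq0
  have hLHS : fFG s m q = (1 - x*(s-1)/s) * (s^a)⁻¹ := by
    rw [fFG, hsum, hcast, hxdef, pow_succ]
    field_simp
    ring
  rw [hLHS, hrpow]
  calc (1 - x*(s-1)/s) * (s^a)⁻¹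
      ≤ ((2 / Real.exp 1) * ((s - 1) / Real.log s)
          * (Real.exp (x * Real.log s))⁻¹) * (s^a)⁻¹ :=
        mul_le_mul_of_nonneg_right hk2 (by positivity)
    _ = 2 / Real.exp 1 * ((s - 1) / Real.log s)
          * ((s^a)⁻¹ * (Real.exp (x * Real.log s))⁻¹) := by ring
end

section
/- Let s ≥ 2 and m₀ ≥ 2 be integers, let r : ℕ → ℕ satisfy r(m) = 0 for all m < m₀, and let ρ be a real number such that m·ρ ≥ ln(s²·m²·r(m)) for every m ≥ 1 with r(m) ≥ 1. Then (2s/e)·∑_{m ≥ 1} r(m)·e^{−m·ρ} ≤ 1/(s·m₀). -/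
open Finset

/-- telescoping sum with a cutoff -/
lemma tel_aux (G : ℕ → ℝ) (m₀ : ℕ) :
    ∀ n, ∑ m ∈ Finset.range n, (if m < m₀ then (0:ℝ) else G (m-1) - G m)
      = G (m₀ - 1) - G (max n m₀ - 1) := by
  intro n
  induction n with
  | zero => simp
  | succ n ih =>
    rw [Finset.sum_range_succ, ih]
    by_cases hn : n < m₀
    · have h1 : n ⊔ m₀ - 1 = m₀ - 1 := by omega
      have h2 : (n+1) ⊔ m₀ - 1 = m₀ - 1 := by omega
      rw [if_pos hn, h1, h2]; ring
    · have h1 : n ⊔ m₀ - 1 = n - 1 := by omega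
      have h2 : (n+1) ⊔ m₀ - 1 = n := by omega
      rw [if_neg (by omega), h1, h2]; ring

/-- Let `s ≥ 2` and `m₀ ≥ 2` be integers, let `r : ℕ → ℕ` vanish below `m₀`, and let `ρ`
be a real number with `m·ρ ≥ ln(s²·m²·r(m))` for every `m ≥ 1` with `r(m) ≥ 1`. Then
`(2s/e)·∑_{m ≥ 1} r(m)·e^{−m·ρ} ≤ 1/(s·m₀)`. -/
theorem stmt_15 (s m₀ : ℕ) (hs : 2 ≤ s) (hm₀ : 2 ≤ m₀)
    (r : ℕ → ℕ) (hr0 : ∀ m, m < m₀ → r m = 0) (ρ : ℝ)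
    (hρ : ∀ m : ℕ, 1 ≤ m → 1 ≤ r m →
      Real.log ((s : ℝ) ^ 2 * (m : ℝ) ^ 2 * (r m : ℝ)) ≤ (m : ℝ) * ρ) :
    (2 * (s : ℝ) / Real.exp 1) * ∑' m : ℕ, (r m : ℝ) * Real.exp (-(m : ℝ) * ρ) ≤
      1 / ((s : ℝ) * (m₀ : ℝ)) := by
  have hs1 : (2:ℝ) ≤ (s:ℝ) := by exact_mod_cast hs
  have hm1 : (2:ℝ) ≤ (m₀:ℝ) := by exact_mod_cast hm₀
  have hspos : (0:ℝ) < s := by linarith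
  set G : ℕ → ℝ := fun k => ((k : ℝ) + 1/2)⁻¹ with hGdef
  have hGnn : ∀ k, 0 ≤ G k := by
    intro k
    have : (0:ℝ) < (k:ℝ) + 1/2 := by positivity
    positivity
  set f : ℕ → ℝ := fun m => (r m : ℝ) * Real.exp (-(m : ℝ) * ρ) with hfdef
  have hfnn : ∀ m, 0 ≤ f m := by
    intro m; exact mul_nonneg (Nat.cast_nonneg _) (Real.exp_pos _).le
  have hGcast : ∀ m : ℕ, 1 ≤ m → G (m-1) = ((m:ℝ) - 1 + 1/2)⁻¹ := by
    intro m hm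
    rw [hGdef]; simp only
    congr 1
    push_cast [Nat.cast_sub hm]
    ring
  -- pointwise bound
  have hkey : ∀ m, f m ≤ ((s:ℝ)^2)⁻¹ * (if m < m₀ then (0:ℝ) else G (m-1) - G m) := by
    intro m
    by_cases hm : m < m₀
    · have hf0 : f m = 0 := by simp [hfdef, hr0 m hm]
      rw [if_pos hm, hf0, mul_zero]
    · push_neg at hm
      rw [if_neg (by omega)]
      have hm2 : 2 ≤ m := le_trans hm₀ hm
      have hmr : (2:ℝ) ≤ (m:ℝ) := by exact_mod_cast hm2
      have hG1 : G (m-1) = ((m:ℝ) - 1 + 1/2)⁻¹ := hGcast m (by omega)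
      have hGle : G m ≤ G (m - 1) := by
        rw [hG1, hGdef]
        exact inv_anti₀ (by linarith) (by linarith)
      by_cases hr : r m = 0
      · have hf0 : f m = 0 := by simp [hfdef, hr]
        rw [hf0]
        exact mul_nonneg (by positivity) (sub_nonneg.mpr hGle)
      · have hr1 : 1 ≤ r m := Nat.one_le_iff_ne_zero.mpr hr
        have hrr : (1:ℝ) ≤ (r m : ℝ) := by exact_mod_cast hr1
        have hpos : (0:ℝ) < (s:ℝ)^2 * (m:ℝ)^2 * (r m : ℝ) := by positivity
        have h1 : (s:ℝ)^2 * (m:ℝ)^2 * (r m : ℝ) ≤ Real.exp ((m:ℝ) * ρ) := by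
          calc (s:ℝ)^2 * (m:ℝ)^2 * (r m : ℝ)
              = Real.exp (Real.log ((s:ℝ)^2 * (m:ℝ)^2 * (r m : ℝ))) := (Real.exp_log hpos).symm
            _ ≤ Real.exp ((m:ℝ) * ρ) := Real.exp_le_exp.mpr (hρ m (by omega) hr1)
        have h2 : f m ≤ ((s:ℝ)^2 * (m:ℝ)^2)⁻¹ := by
          have hexp : Real.exp (-(m:ℝ) * ρ) = (Real.exp ((m:ℝ) * ρ))⁻¹ := by
            rw [← Real.exp_neg]; ring_nf
          have hrne : (r m : ℝ) ≠ 0 := by positivity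
          calc f m = (r m : ℝ) * (Real.exp ((m:ℝ) * ρ))⁻¹ := by rw [hfdef]; simp only [hexp]
            _ ≤ (r m : ℝ) * ((s:ℝ)^2 * (m:ℝ)^2 * (r m : ℝ))⁻¹ := by
                exact mul_le_mul_of_nonneg_left (inv_anti₀ hpos h1) (by positivity)
            _ = ((s:ℝ)^2 * (m:ℝ)^2)⁻¹ := by
                field_simp
        have h3 : ((m:ℝ)^2)⁻¹ ≤ G (m-1) - G m := by
          rw [hG1, hGdef]
          simp only
          have hne1 : ((m:ℝ) - 1 + 1/2) ≠ 0 := by nlinarith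
          have hne2 : ((m:ℝ) + 1/2) ≠ 0 := by nlinarith
          have e1 : ((m:ℝ) - 1 + 1/2)⁻¹ - ((m:ℝ) + 1/2)⁻¹ = ((m:ℝ)^2 - 1/4)⁻¹ := by
            rw [inv_sub_inv hne1 hne2,
              show ((m:ℝ)+1/2) - ((m:ℝ)-1+1/2) = 1 from by ring,
              show ((m:ℝ)-1+1/2)*((m:ℝ)+1/2) = (m:ℝ)^2 - 1/4 from by ring, one_div]
          rw [e1]
          exact inv_anti₀ (by nlinarith) (by nlinarith)
        calc f m ≤ ((s:ℝ)^2 * (m:ℝ)^2)⁻¹ := h2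
          _ = ((s:ℝ)^2)⁻¹ * ((m:ℝ)^2)⁻¹ := by rw [mul_inv]
          _ ≤ ((s:ℝ)^2)⁻¹ * (G (m-1) - G m) :=
              mul_le_mul_of_nonneg_left h3 (by positivity)
  -- tsum bound
  have hC : ∑' m, f m ≤ ((s:ℝ)^2)⁻¹ * ((m₀:ℝ) - 1/2)⁻¹ := by
    apply Real.tsum_le_of_sum_range_le hfnn
    intro n
    calc ∑ i ∈ Finset.range n, f i
        ≤ ∑ i ∈ Finset.range n, ((s:ℝ)^2)⁻¹ * (if i < m₀ then (0:ℝ) else G (i-1) - G i) :=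
          Finset.sum_le_sum (fun i _ => hkey i)
      _ = ((s:ℝ)^2)⁻¹ * ∑ i ∈ Finset.range n, (if i < m₀ then (0:ℝ) else G (i-1) - G i) := by
          rw [Finset.mul_sum]
      _ = ((s:ℝ)^2)⁻¹ * (G (m₀-1) - G (max n m₀ - 1)) := by rw [tel_aux]
      _ ≤ ((s:ℝ)^2)⁻¹ * G (m₀-1) := by
          apply mul_le_mul_of_nonneg_left _ (by positivity)
          linarith [hGnn (max n m₀ - 1)]
      _ = ((s:ℝ)^2)⁻¹ * ((m₀:ℝ) - 1/2)⁻¹ := by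
          rw [hGcast m₀ (by omega), show (m₀:ℝ) - 1 + 1/2 = (m₀:ℝ) - 1/2 from by ring]
  -- final arithmetic
  have he1 : (2.7182818283:ℝ) < Real.exp 1 := Real.exp_one_gt_d9
  have hepos : (0:ℝ) < Real.exp 1 := Real.exp_pos 1
  have hMpos : (0:ℝ) < (m₀:ℝ) - 1/2 := by linarith
  have hcoef : (0:ℝ) ≤ 2 * (s:ℝ) / Real.exp 1 := by positivity
  have key : 2 * (m₀:ℝ) ≤ Real.exp 1 * ((m₀:ℝ) - 1/2) := by
    nlinarith [mul_le_mul_of_nonneg_left hm1 (by linarith : (0:ℝ) ≤ Real.exp 1 - 2)]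
  calc (2 * (s : ℝ) / Real.exp 1) * ∑' m : ℕ, f m
      ≤ (2 * (s : ℝ) / Real.exp 1) * (((s:ℝ)^2)⁻¹ * ((m₀:ℝ) - 1/2)⁻¹) :=
        mul_le_mul_of_nonneg_left hC hcoef
    _ = 2 / (Real.exp 1 * (s:ℝ) * ((m₀:ℝ) - 1/2)) := by
        have hgen : ∀ M : ℝ, 0 < M →
            (2 * (s:ℝ) / Real.exp 1) * (((s:ℝ)^2)⁻¹ * M⁻¹) = 2 / (Real.exp 1 * (s:ℝ) * M) := by
          intro M hM
          field_simp
        exact hgen _ hMpos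
    _ ≤ 1 / ((s : ℝ) * (m₀ : ℝ)) := by
        rw [div_le_div_iff₀ (by positivity) (by positivity)]
        nlinarith [mul_nonneg (sub_nonneg.mpr key) (le_of_lt hspos)]
end
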